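/- Let f : ℝⁿ → ℝ be Lipschitz. For every x, the averaged derivative (1/μ(D)) ∫_D fderiv f (x+y) dy belongs to the closure of the convex hull of the set of derivatives of f at points of differentiability in the translated set x + D, i.e. it lies in closure (convexHull ℝ { g | ∃ z ∈ x +ᵥ D, DifferentiableAt ℝ f z ∧ fderiv ℝ f z = g }). In particular, if fderiv φ_D (x) = 0 then 0 belongs to this closed convex hull. -/

import Mathlib

open MeasureTheory
open scoped NNReal Pointwise

/-- The Steklov-type average of `f` over `D`. -/
noncomputable def steklovAvg (n : ℕ) (D : Set (EuclideanSpace ℝ (Fin n)))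
    (f : EuclideanSpace ℝ (Fin n) → ℝ) (x : EuclideanSpace ℝ (Fin n)) : ℝ :=
  (volume D).toReal⁻¹ • ∫ y in D, f (x + y)

/-- The averaged derivative of a Lipschitz function `f` over `x + D` belongs to the
closed convex hull of the derivatives of `f` at points of differentiability in `x + D`;
in particular if `x` is a stationary point of the average, `0` lies in this hull. -/
theorem steklov_average_fderiv_mem_closure_convexHull (n : ℕ) (hn : 1 ≤ n)
    (D : Set (EuclideanSpace ℝ (Fin n))) (hDc : IsCompact D) (hD0 : 0 < volume D)
    (f : EuclideanSpace ℝ (Fin n) → ℝ) (L : ℝ≥0) (hf : LipschitzWith L f) :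
    ∀ x : EuclideanSpace ℝ (Fin n),
      ((volume D).toReal⁻¹ • ∫ y in D, fderiv ℝ f (x + y)) ∈
        closure (convexHull ℝ {g : EuclideanSpace ℝ (Fin n) →L[ℝ] ℝ |
          ∃ z ∈ x +ᵥ D, DifferentiableAt ℝ f z ∧ fderiv ℝ f z = g}) ∧
      (fderiv ℝ (steklovAvg n D f) x = 0 →
        (0 : EuclideanSpace ℝ (Fin n) →L[ℝ] ℝ) ∈
          closure (convexHull ℝ {g : EuclideanSpace ℝ (Fin n) →L[ℝ] ℝ |
            ∃ z ∈ x +ᵥ D, DifferentiableAt ℝ f z ∧ fderiv ℝ f z = g})) := by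
  intro x
  set S : Set (EuclideanSpace ℝ (Fin n) →L[ℝ] ℝ) :=
    {g : EuclideanSpace ℝ (Fin n) →L[ℝ] ℝ | ∃ z ∈ x +ᵥ D, DifferentiableAt ℝ f z ∧ fderiv ℝ f z = g} with hS
  have hDm : MeasurableSet D := hDc.measurableSet
  have hDfin : volume D ≠ ⊤ := hDc.measure_lt_top.ne
  haveI : Fact (volume D < ⊤) := ⟨hDc.measure_lt_top⟩
  -- a.e. differentiability of `f` at `x + y`
  have hae : ∀ᵐ y ∂((volume : Measure (EuclideanSpace ℝ (Fin n))).restrict D), DifferentiableAt ℝ f (x + y) := by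
    have h1 : ∀ᵐ z ∂(volume : Measure (EuclideanSpace ℝ (Fin n))), DifferentiableAt ℝ f z := hf.ae_differentiableAt
    have h2 : ∀ᵐ y ∂(volume : Measure (EuclideanSpace ℝ (Fin n))), DifferentiableAt ℝ f (x + y) :=
      (measurePreserving_add_left (volume : Measure (EuclideanSpace ℝ (Fin n))) x).quasiMeasurePreserving.ae h1
    exact ae_restrict_of_ae h2
  -- measurability and integrability of the derivative
  have hmeas : AEStronglyMeasurable (fun y : EuclideanSpace ℝ (Fin n) => fderiv ℝ f (x + y))
      ((volume : Measure (EuclideanSpace ℝ (Fin n))).restrict D) :=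
    ((measurable_fderiv ℝ f).comp (measurable_const_add x)).aestronglyMeasurable
  have hbound : ∀ y : EuclideanSpace ℝ (Fin n), ‖fderiv ℝ f (x + y)‖ ≤ (L : ℝ) := fun y =>
    norm_fderiv_le_of_lipschitz ℝ hf
  have hint : IntegrableOn (fun y : EuclideanSpace ℝ (Fin n) => fderiv ℝ f (x + y)) D volume := by
    refine Integrable.mono' (integrable_const (L : ℝ)) hmeas ?_
    exact Filter.Eventually.of_forall hbound
  -- a.e. membership in S
  have hmemS : ∀ᵐ y ∂((volume : Measure (EuclideanSpace ℝ (Fin n))).restrict D),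
      fderiv ℝ f (x + y) ∈ closure (convexHull ℝ S) := by
    filter_upwards [hae, ae_restrict_mem hDm] with y hy hyD
    refine subset_closure (subset_convexHull ℝ S ?_)
    exact ⟨x + y, ⟨y, hyD, rfl⟩, hy, rfl⟩
  -- Part 1: the average is in the closed convex hull
  have h1 : ((volume D).toReal⁻¹ • ∫ y in D, fderiv ℝ f (x + y)) ∈
      closure (convexHull ℝ S) := by
    have := (convex_convexHull ℝ S).closure.set_average_mem isClosed_closure hD0.ne'
      hDfin hmemS hint
    rw [setAverage_eq] at this
    exact this
  refine ⟨h1, fun h0 => ?_⟩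
  -- Part 2: differentiation under the integral sign
  have key : HasFDerivAt (fun x' : EuclideanSpace ℝ (Fin n) => ∫ y in D, f (x' + y) ∂volume)
      (∫ y in D, fderiv ℝ f (x + y) ∂volume) x := by
    have := hasFDerivAt_integral_of_dominated_loc_of_lip
      (F := fun (x' : EuclideanSpace ℝ (Fin n)) (y : EuclideanSpace ℝ (Fin n)) => f (x' + y))
      (F' := fun y : EuclideanSpace ℝ (Fin n) => fderiv ℝ f (x + y)) (x₀ := x)
      (bound := fun _ => (L : ℝ)) (μ := (volume : Measure (EuclideanSpace ℝ (Fin n))).restrict D)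
      (s := Set.univ) Filter.univ_mem
      (Filter.Eventually.of_forall fun x' =>
        ((hf.continuous.comp (continuous_const.add continuous_id)).aestronglyMeasurable))
      ?_ hmeas ?_ (integrable_const _) ?_
    · exact this.2
    · exact ((hf.continuous.comp (continuous_const.add continuous_id)).continuousOn).integrableOn_compact hDc
    · refine Filter.Eventually.of_forall fun y => ?_
      have hl : LipschitzWith L (fun x' : EuclideanSpace ℝ (Fin n) => f (x' + y)) := by
        refine LipschitzWith.of_dist_le_mul fun a b => ?_
        calc dist (f (a + y)) (f (b + y)) ≤ (L : ℝ) * dist (a + y) (b + y) := hf.dist_le_mul _ _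
          _ = (L : ℝ) * dist a b := by rw [dist_add_right]
      have : Real.nnabs ((L : ℝ)) = L := Real.nnabs_coe L
      rw [this]
      exact hl.lipschitzOnWith
    · filter_upwards [hae] with y hy
      have h1 : HasFDerivAt (fun x' : EuclideanSpace ℝ (Fin n) => x' + y) (ContinuousLinearMap.id ℝ (EuclideanSpace ℝ (Fin n))) x :=
        (hasFDerivAt_id x).add_const y
      have := hy.hasFDerivAt.comp x h1
      simpa [Function.comp_def] using this
  have havg : HasFDerivAt (steklovAvg n D f)
      ((volume D).toReal⁻¹ • ∫ y in D, fderiv ℝ f (x + y) ∂volume) x := by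
    unfold steklovAvg
    exact key.fun_const_smul _
  rw [havg.fderiv] at h0
  rw [← h0]
  exact h1
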